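/- Let M be a Hermitian matrix over ℂ indexed by (Fin dA × Fin dB) and let n ≥ 1. Then for all Euclidean-unit vectors a : (Fin n → Fin dA) → ℂ and b : (Fin n → Fin dB) → ℂ, Re ⟪a ⊗ b, (M^{⊗n}).mulVec (a ⊗ b)⟫ ≤ ‖M^Γ‖^n, where (a ⊗ b)(f,g) := a f * b g. (This expresses h_SEP(M^{⊗n}) ≤ ‖M^Γ‖_∞^n.) -/

import Mathlib

open Matrix

noncomputable section

/-- Partial transpose on the second tensor factor. -/
def ptrans {α β : Type*} (X : Matrix (α × β) (α × β) ℂ) : Matrix (α × β) (α × β) ℂ :=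
  fun p q => X (p.1, q.2) (q.1, p.2)

/-- L2 (Euclidean) operator norm of a matrix: the largest singular value. -/
def opNorm {n : Type*} [Fintype n] [DecidableEq n] (X : Matrix n n ℂ) : ℝ :=
  ‖Matrix.toEuclideanCLM (𝕜 := ℂ) X‖

/-- `n`-th tensor power of a bipartite matrix. -/
def tensPow {dA dB : ℕ} (M : Matrix (Fin dA × Fin dB) (Fin dA × Fin dB) ℂ) (n : ℕ) :
    Matrix ((Fin n → Fin dA) × (Fin n → Fin dB)) ((Fin n → Fin dA) × (Fin n → Fin dB)) ℂ :=
  fun p q => ∏ i : Fin n, M (p.1 i, p.2 i) (q.1 i, q.2 i)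

lemma mulVec_sq_sum_le {ι : Type*} [Fintype ι] [DecidableEq ι] (X : Matrix ι ι ℂ) (v : ι → ℂ) :
    ∑ i, ‖X.mulVec v i‖ ^ 2 ≤ (opNorm X) ^ 2 * ∑ i, ‖v i‖ ^ 2 := by
  set w : EuclideanSpace ℂ ι := (WithLp.equiv 2 _).symm v with hw
  have h1 : ‖toEuclideanCLM (𝕜 := ℂ) X w‖ ≤ opNorm X * ‖w‖ :=
    (toEuclideanCLM (𝕜 := ℂ) X).le_opNorm w
  have h2 : ∀ i, (toEuclideanCLM (𝕜 := ℂ) X w) i = X.mulVec v i := by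
    intro i
    have := congrFun (Matrix.ofLp_toEuclideanCLM (𝕜 := ℂ) X w) i
    simpa [hw] using this
  have hn1 : ‖toEuclideanCLM (𝕜 := ℂ) X w‖ = Real.sqrt (∑ i, ‖X.mulVec v i‖ ^ 2) := by
    rw [EuclideanSpace.norm_eq]
    exact congrArg Real.sqrt (Finset.sum_congr rfl fun i _ => by rw [h2])
  have hn2 : ‖w‖ = Real.sqrt (∑ i, ‖v i‖ ^ 2) := by
    rw [EuclideanSpace.norm_eq]; rfl
  have hs1 : (0:ℝ) ≤ ∑ i, ‖X.mulVec v i‖ ^ 2 := Finset.sum_nonneg fun _ _ => sq_nonneg _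
  have hs2 : (0:ℝ) ≤ ∑ i, ‖v i‖ ^ 2 := Finset.sum_nonneg fun _ _ => sq_nonneg _
  have := pow_le_pow_left₀ (norm_nonneg _) h1 2
  rw [hn1, hn2, mul_pow, Real.sq_sqrt hs1, Real.sq_sqrt hs2] at this
  exact this

lemma kron_sq_bound {ι κ : Type*} [Fintype ι] [DecidableEq ι] [Fintype κ]
    (P : Matrix ι ι ℂ) (Q : Matrix κ κ ℂ) (cQ : ℝ)
    (hQ : ∀ x : κ → ℂ, ∑ k, ‖Q.mulVec x k‖ ^ 2 ≤ cQ * ∑ l, ‖x l‖ ^ 2)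
    (v : ι × κ → ℂ) :
    ∑ r : ι × κ, ‖∑ s : ι × κ, (P r.1 s.1 * Q r.2 s.2) * v s‖ ^ 2 ≤
      (opNorm P) ^ 2 * cQ * ∑ s : ι × κ, ‖v s‖ ^ 2 := by
  set u : ι → κ → ℂ := fun j k => Q.mulVec (fun l => v (j, l)) k with hu
  have hstep : ∀ (i : ι) (k : κ),
      (∑ s : ι × κ, (P i s.1 * Q k s.2) * v s) = P.mulVec (fun j => u j k) i := by
    intro i k
    rw [Fintype.sum_prod_type]
    simp only [mulVec, dotProduct, hu, Finset.mul_sum, mul_assoc]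
  have key : (∑ r : ι × κ, ‖∑ s : ι × κ, (P r.1 s.1 * Q r.2 s.2) * v s‖ ^ 2)
      = ∑ k, ∑ i, ‖P.mulVec (fun j => u j k) i‖ ^ 2 := by
    rw [Fintype.sum_prod_type, Finset.sum_comm]
    exact Finset.sum_congr rfl fun k _ => Finset.sum_congr rfl fun i _ => by rw [hstep]
  rw [key]
  calc ∑ k, ∑ i, ‖P.mulVec (fun j => u j k) i‖ ^ 2
      ≤ ∑ k, (opNorm P) ^ 2 * ∑ j, ‖u j k‖ ^ 2 :=
        Finset.sum_le_sum fun k _ => mulVec_sq_sum_le P _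
    _ = (opNorm P) ^ 2 * ∑ j, ∑ k, ‖u j k‖ ^ 2 := by
        rw [← Finset.mul_sum, Finset.sum_comm]
    _ ≤ (opNorm P) ^ 2 * ∑ j, (cQ * ∑ l, ‖v (j, l)‖ ^ 2) := by
        refine mul_le_mul_of_nonneg_left (Finset.sum_le_sum fun j _ => hQ _) (sq_nonneg _)
    _ = (opNorm P) ^ 2 * cQ * ∑ s : ι × κ, ‖v s‖ ^ 2 := by
        rw [← Finset.mul_sum, ← mul_assoc, Fintype.sum_prod_type]

lemma tensPow_sq_bound {dA dB : ℕ} (Y : Matrix (Fin dA × Fin dB) (Fin dA × Fin dB) ℂ) :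
    ∀ (n : ℕ) (v : ((Fin n → Fin dA) × (Fin n → Fin dB)) → ℂ),
    ∑ p, ‖(tensPow Y n).mulVec v p‖ ^ 2 ≤ ((opNorm Y) ^ 2) ^ n * ∑ p, ‖v p‖ ^ 2 := by
  intro n
  induction n with
  | zero =>
    intro v
    have : (tensPow Y 0).mulVec v = v := by
      funext p
      simp only [mulVec, dotProduct, tensPow, Finset.univ_eq_empty, Finset.prod_empty,
        one_mul]
      exact Finset.sum_eq_single_of_mem p (Finset.mem_univ p)
        (fun q _ hq => absurd (Subsingleton.elim q p) hq)
    rw [this, pow_zero, one_mul]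
  | succ n ih =>
    intro v
    let e : ((Fin (n+1) → Fin dA) × (Fin (n+1) → Fin dB)) ≃ ((Fin dA × Fin dB) × ((Fin n → Fin dA) × (Fin n → Fin dB))) :=
      { toFun := fun p => ((p.1 0, p.2 0), (Fin.tail p.1, Fin.tail p.2))
        invFun := fun r => (Fin.cons r.1.1 r.2.1, Fin.cons r.1.2 r.2.2)
        left_inv := fun p => by
          simp [Fin.cons_self_tail]
        right_inv := fun r => by
          simp [Fin.tail_cons, Fin.cons_zero] }
    have hmat : ∀ p q, tensPow Y (n+1) p q = Y (e p).1 (e q).1 * tensPow Y n (e p).2 (e q).2 := by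
      intro p q
      simp only [tensPow, e, Equiv.coe_fn_mk]
      rw [Fin.prod_univ_succ]
      rfl
    have hmv : ∀ r : (Fin dA × Fin dB) × ((Fin n → Fin dA) × (Fin n → Fin dB)), (tensPow Y (n+1)).mulVec v (e.symm r) =
        ∑ s, (Y r.1 s.1 * tensPow Y n r.2 s.2) * (v (e.symm s)) := by
      intro r
      rw [mulVec, dotProduct,
        ← Equiv.sum_comp e.symm (fun q => tensPow Y (n+1) (e.symm r) q * v q)]
      refine Finset.sum_congr rfl fun s _ => ?_
      rw [hmat]
      simp
    have houter : ∑ p, ‖(tensPow Y (n+1)).mulVec v p‖ ^ 2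
        = ∑ r : (Fin dA × Fin dB) × ((Fin n → Fin dA) × (Fin n → Fin dB)), ‖∑ s, (Y r.1 s.1 * tensPow Y n r.2 s.2) * (v (e.symm s))‖ ^ 2 := by
      rw [← Equiv.sum_comp e.symm (fun p => ‖(tensPow Y (n+1)).mulVec v p‖ ^ 2)]
      exact Finset.sum_congr rfl fun r _ => by rw [hmv]
    rw [houter]
    have := kron_sq_bound Y (tensPow Y n) (((opNorm Y) ^ 2) ^ n) (fun x => ih x)
      (fun s => v (e.symm s))
    calc ∑ r : (Fin dA × Fin dB) × ((Fin n → Fin dA) × (Fin n → Fin dB)), ‖∑ s, (Y r.1 s.1 * tensPow Y n r.2 s.2) * (v (e.symm s))‖ ^ 2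
        ≤ (opNorm Y) ^ 2 * ((opNorm Y) ^ 2) ^ n * ∑ s, ‖v (e.symm s)‖ ^ 2 := this
      _ = ((opNorm Y) ^ 2) ^ (n+1) * ∑ p, ‖v p‖ ^ 2 := by
          rw [Equiv.sum_comp e.symm (fun p => ‖v p‖ ^ 2), pow_succ]
          ring

lemma quad_swap {dA dB n : ℕ} (M : Matrix (Fin dA × Fin dB) (Fin dA × Fin dB) ℂ)
    (a : (Fin n → Fin dA) → ℂ) (b : (Fin n → Fin dB) → ℂ) :
    (star (fun p : (Fin n → Fin dA) × (Fin n → Fin dB) => a p.1 * b p.2) ⬝ᵥ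
        (tensPow M n).mulVec (fun p : (Fin n → Fin dA) × (Fin n → Fin dB) => a p.1 * b p.2)) =
    (star (fun p : (Fin n → Fin dA) × (Fin n → Fin dB) => a p.1 * (starRingEnd ℂ) (b p.2)) ⬝ᵥ
        (tensPow (ptrans M) n).mulVec
          (fun p : (Fin n → Fin dA) × (Fin n → Fin dB) => a p.1 * (starRingEnd ℂ) (b p.2))) := by
  have expand : ∀ (N : Matrix ((Fin n → Fin dA) × (Fin n → Fin dB))
      ((Fin n → Fin dA) × (Fin n → Fin dB)) ℂ)
      (u : ((Fin n → Fin dA) × (Fin n → Fin dB)) → ℂ), star u ⬝ᵥ N.mulVec u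
      = ∑ r : ((Fin n → Fin dA) × (Fin n → Fin dB)) × ((Fin n → Fin dA) × (Fin n → Fin dB)),
          star (u r.1) * (N r.1 r.2 * u r.2) := by
    intro N u
    rw [Fintype.sum_prod_type]
    simp only [dotProduct, mulVec, Finset.mul_sum, Pi.star_apply]
  rw [expand, expand]
  refine Fintype.sum_equiv
    ⟨fun r => ((r.1.1, r.2.2), (r.2.1, r.1.2)), fun r => ((r.1.1, r.2.2), (r.2.1, r.1.2)),
      fun r => rfl, fun r => rfl⟩ _ _ ?_
  intro x
  simp only [Equiv.coe_fn_mk, tensPow, ptrans, star_mul', Complex.star_def,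
    Complex.conj_conj, Finset.prod_mul_distrib]
  ring

/-- Theorem: `h_SEP(M^{⊗n}) ≤ ‖M^Γ‖^n` for Hermitian `M`. -/
theorem hSEP_tensor_power_le_opNorm_ptrans_pow {dA dB : ℕ}
    (M : Matrix (Fin dA × Fin dB) (Fin dA × Fin dB) ℂ) (hM : M.IsHermitian)
    (n : ℕ) (hn : 1 ≤ n)
    (a : EuclideanSpace ℂ (Fin n → Fin dA)) (b : EuclideanSpace ℂ (Fin n → Fin dB))
    (ha : ‖a‖ = 1) (hb : ‖b‖ = 1) :
    (star (fun p : (Fin n → Fin dA) × (Fin n → Fin dB) => a p.1 * b p.2) ⬝ᵥ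
        (tensPow M n).mulVec
          (fun p : (Fin n → Fin dA) × (Fin n → Fin dB) => a p.1 * b p.2)).re ≤
      opNorm (ptrans M) ^ n := by
  rw [quad_swap M a b]
  set Y := ptrans M with hY
  set w : ((Fin n → Fin dA) × (Fin n → Fin dB)) → ℂ :=
    fun p => a p.1 * (starRingEnd ℂ) (b p.2) with hwdef
  set w' : EuclideanSpace ℂ ((Fin n → Fin dA) × (Fin n → Fin dB)) :=
    (WithLp.equiv 2 _).symm w with hw'
  set u' : EuclideanSpace ℂ ((Fin n → Fin dA) × (Fin n → Fin dB)) :=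
    (WithLp.equiv 2 _).symm ((tensPow Y n).mulVec w) with hu'
  have hinner : star w ⬝ᵥ (tensPow Y n).mulVec w = inner (𝕜 := ℂ) w' u' := by
    simp only [dotProduct, PiLp.inner_apply, RCLike.inner_apply, Pi.star_apply,
      hw', hu', WithLp.equiv_symm_apply, WithLp.ofLp_toLp, Complex.star_def]
    exact Finset.sum_congr rfl fun _ _ => mul_comm _ _
  -- the squared norm of a
  have hsuma : ∑ f, ‖a f‖ ^ 2 = 1 := by
    have h := EuclideanSpace.norm_eq a
    rw [ha] at h
    exact Real.sqrt_eq_one.mp h.symm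
  have hsumb : ∑ g, ‖b g‖ ^ 2 = 1 := by
    have h := EuclideanSpace.norm_eq b
    rw [hb] at h
    exact Real.sqrt_eq_one.mp h.symm
  have hsumw : ∑ p, ‖w p‖ ^ 2 = 1 := by
    have : ∀ p : (Fin n → Fin dA) × (Fin n → Fin dB),
        ‖w p‖ ^ 2 = ‖a p.1‖ ^ 2 * ‖b p.2‖ ^ 2 := by
      intro p
      simp [hwdef, norm_mul, mul_pow]
    calc ∑ p, ‖w p‖ ^ 2 = ∑ p : (Fin n → Fin dA) × (Fin n → Fin dB),
          ‖a p.1‖ ^ 2 * ‖b p.2‖ ^ 2 := Finset.sum_congr rfl fun p _ => this p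
      _ = (∑ f, ‖a f‖ ^ 2) * (∑ g, ‖b g‖ ^ 2) := by
          rw [Finset.sum_mul_sum, Fintype.sum_prod_type]
      _ = 1 := by rw [hsuma, hsumb, mul_one]
  have hwnorm : ‖w'‖ = 1 := by
    rw [EuclideanSpace.norm_eq]
    have : ∑ p, ‖w' p‖ ^ 2 = 1 := by
      simpa [hw', WithLp.equiv_symm_apply, WithLp.ofLp_toLp] using hsumw
    rw [this, Real.sqrt_one]
  have hopnn : (0:ℝ) ≤ opNorm Y ^ n := pow_nonneg (norm_nonneg _) n
  have hunorm : ‖u'‖ ≤ opNorm Y ^ n := by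
    have hb1 := tensPow_sq_bound Y n w
    rw [hsumw, mul_one] at hb1
    have : ‖u'‖ = Real.sqrt (∑ p, ‖(tensPow Y n).mulVec w p‖ ^ 2) := by
      rw [EuclideanSpace.norm_eq]
      exact congrArg Real.sqrt (Finset.sum_congr rfl fun p _ => by
        simp [hu', WithLp.equiv_symm_apply, WithLp.ofLp_toLp])
    rw [this]
    have h2 : ((opNorm Y) ^ 2) ^ n = (opNorm Y ^ n) ^ 2 := by
      rw [← pow_mul, ← pow_mul, Nat.mul_comm]
    calc Real.sqrt (∑ p, ‖(tensPow Y n).mulVec w p‖ ^ 2)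
        ≤ Real.sqrt ((opNorm Y ^ n) ^ 2) := Real.sqrt_le_sqrt (h2 ▸ hb1)
      _ = opNorm Y ^ n := Real.sqrt_sq hopnn
  calc (star w ⬝ᵥ (tensPow Y n).mulVec w).re
      = (inner (𝕜 := ℂ) w' u').re := by rw [hinner]
    _ ≤ ‖(inner (𝕜 := ℂ) w' u' : ℂ)‖ := Complex.re_le_norm _
    _ ≤ ‖w'‖ * ‖u'‖ := norm_inner_le_norm w' u'
    _ = ‖u'‖ := by rw [hwnorm, one_mul]
    _ ≤ opNorm Y ^ n := hunorm
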